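/- The matrix Σ with entries Σ_{(i,j),(i,j)} = 1, Σ_{(i,j),(i,k)} = 1/3 (distinct indices, with standard sign conventions) and Σ_{(i,j),(r,s)} = 0 for all-distinct indices has exactly two eigenvalues: 1/3 with eigenspace the cycle space of K_ℓ (dimension (ℓ-1)(ℓ-2)/2), and 1 + (ℓ-2)/3 with eigenspace the cut space (dimension ℓ-1). -/

import Mathlib

open Finset Matrix

/-- Edges of the complete graph `K_ℓ`, oriented from smaller to larger index. -/
abbrev Edge (ℓ : ℕ) := {p : Fin ℓ × Fin ℓ // p.1 < p.2}

/-- The signed entry `Σ_{(a,b),(c,d)}` of the covariance matrix, with the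
conventions `Σ_{(j,i),(r,s)} = -Σ_{(i,j),(r,s)}` and `Σ_{(i,j),(s,r)} = -Σ_{(i,j),(r,s)}`:
it is 1 on equal oriented edges, ±1/3 on edges sharing exactly one vertex,
and 0 on disjoint edges. -/
noncomputable def sigEntry {ℓ : ℕ} (a b c d : Fin ℓ) : ℝ :=
  if a = c ∧ b = d then 1
  else if a = d ∧ b = c then -1
  else if a = c ∨ b = d then 1/3
  else if a = d ∨ b = c then -1/3
  else 0

/-- The covariance matrix `Σ` on the edge space of `K_ℓ`. -/
noncomputable def SigMat (ℓ : ℕ) : Matrix (Edge ℓ) (Edge ℓ) ℝ :=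
  fun e f => sigEntry e.1.1 e.1.2 f.1.1 f.1.2

/-- The boundary (incidence) matrix of `K_ℓ`, sending the edge `(u,v)` to `u - v`. -/
noncomputable def bdry (ℓ : ℕ) : Matrix (Fin ℓ) (Edge ℓ) ℝ :=
  fun u e => if e.1.1 = u then 1 else if e.1.2 = u then -1 else 0

/-- The cycle space of `K_ℓ`: the kernel of the boundary map. -/
noncomputable def cycleSpace (ℓ : ℕ) : Submodule ℝ (Edge ℓ → ℝ) :=
  LinearMap.ker (Matrix.toLin' (bdry ℓ))

/-- The star vector at vertex `i`: the sum of all outgoing edges `(i,j)`,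
with the sign convention `(j,i) = -(i,j)`. -/
noncomputable def starVec (ℓ : ℕ) (i : Fin ℓ) : Edge ℓ → ℝ :=
  fun e => if e.1.1 = i then 1 else if e.1.2 = i then -1 else 0

/-- The cut space of `K_ℓ`: the span of the star vectors. -/
noncomputable def cutSpace (ℓ : ℕ) : Submodule ℝ (Edge ℓ → ℝ) :=
  Submodule.span ℝ (Set.range (starVec ℓ))

/-- The antisymmetric extension of an edge-space vector to all ordered pairs,
with the convention `x_{(j,i)} = -x_{(i,j)}`. -/
noncomputable def extAS {ℓ : ℕ} (x : Edge ℓ → ℝ) (i j : Fin ℓ) : ℝ :=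
  if h : i < j then x ⟨(i, j), h⟩ else if h : j < i then -x ⟨(j, i), h⟩ else 0

/-- The net signed flow out of vertex `i`. -/
noncomputable def flow {ℓ : ℕ} (x : Edge ℓ → ℝ) (i : Fin ℓ) : ℝ := ∑ j, extAS x i j

namespace SigAux

variable {ℓ : ℕ}

lemma sum_edge {M : Type*} [AddCommMonoid M] (f : Edge ℓ → M) :
    ∑ e : Edge ℓ, f e = ∑ i : Fin ℓ, ∑ j : Fin ℓ, if h : i < j then f ⟨(i, j), h⟩ else 0 := by
  classical
  set F : Fin ℓ × Fin ℓ → M := fun p => if h : p.1 < p.2 then f ⟨p, h⟩ else 0 with hF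
  have h1 : ∑ e : Edge ℓ, f e = ∑ e : Edge ℓ, F e.val := by
    refine Finset.sum_congr rfl fun e _ => ?_
    simp [hF, e.2]
  have h2 : ∑ p ∈ univ.filter (fun p : Fin ℓ × Fin ℓ => p.1 < p.2), F p = ∑ e : Edge ℓ, F e.val :=
    Finset.sum_subtype _ (by simp) F
  have h3 : ∑ p ∈ univ.filter (fun p : Fin ℓ × Fin ℓ => p.1 < p.2), F p
      = ∑ p : Fin ℓ × Fin ℓ, F p :=
    Finset.sum_filter_of_ne (by intro p _ hne; by_contra h; exact hne (by simp [hF, h]))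
  rw [h1, ← h2, h3, Fintype.sum_prod_type]

lemma pair_sum (a b : Fin ℓ) (hab : a ≠ b) (g : Fin ℓ → ℝ) :
    ∑ u : Fin ℓ, (if a = u then (1:ℝ) else if b = u then -1 else 0) * g u = g a - g b := by
  have h : ∀ u : Fin ℓ, (if a = u then (1:ℝ) else if b = u then -1 else 0) * g u
      = (if a = u then g u else 0) - (if b = u then g u else 0) := by
    intro u; split_ifs with h1 h2 h2 <;>
      first | (exact absurd (h1.trans h2.symm) hab) | ring
  simp only [h, Finset.sum_sub_distrib, Finset.sum_ite_eq, Finset.mem_univ, if_true]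

lemma sig_entry_eq (a b c d : Fin ℓ) (hab : a < b) (hcd : c < d) :
    sigEntry a b c d = 3⁻¹ * ((if a = c ∧ b = d then 1 else 0) +
      ((if c = a then (1:ℝ) else if d = a then -1 else 0) -
        (if c = b then (1:ℝ) else if d = b then -1 else 0))) := by
  unfold sigEntry
  split_ifs <;> first | (exfalso; omega) | norm_num

lemma bdryT_mulVec (y : Fin ℓ → ℝ) (e : Edge ℓ) :
    ((bdry ℓ)ᵀ *ᵥ y) e = y e.1.1 - y e.1.2 := by
  obtain ⟨⟨a, b⟩, hab⟩ := e
  have h := pair_sum a b hab.ne y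
  simpa [Matrix.mulVec, dotProduct, bdry] using h

lemma sig_eq : SigMat ℓ = (3:ℝ)⁻¹ • (1 + (bdry ℓ)ᵀ * bdry ℓ) := by
  ext e f
  obtain ⟨⟨a, b⟩, hab⟩ := e
  obtain ⟨⟨c, d⟩, hcd⟩ := f
  have hmul : ((bdry ℓ)ᵀ * bdry ℓ) ⟨(a,b),hab⟩ ⟨(c,d),hcd⟩
      = (if c = a then (1:ℝ) else if d = a then -1 else 0) -
        (if c = b then (1:ℝ) else if d = b then -1 else 0) := by
    have h := pair_sum a b hab.ne (fun u => bdry ℓ u ⟨(c,d),hcd⟩)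
    simpa [Matrix.mul_apply, Matrix.transpose_apply, bdry] using h
  simp only [SigMat, Matrix.smul_apply, Matrix.add_apply, Matrix.one_apply, hmul,
    Subtype.mk.injEq, Prod.mk.injEq, smul_eq_mul]
  exact sig_entry_eq a b c d hab hcd

lemma lap (y : Fin ℓ → ℝ) :
    bdry ℓ *ᵥ ((bdry ℓ)ᵀ *ᵥ y) = (ℓ:ℝ) • y - (∑ i, y i) • (fun _ => (1:ℝ)) := by
  ext u
  have h1 : (bdry ℓ *ᵥ ((bdry ℓ)ᵀ *ᵥ y)) u = ∑ e : Edge ℓ, bdry ℓ u e * ((bdry ℓ)ᵀ *ᵥ y) e :=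
    rfl
  simp only [bdryT_mulVec] at h1
  rw [h1, sum_edge (f := fun e : Edge ℓ => bdry ℓ u e * (y e.1.1 - y e.1.2))]
  have hterm : ∀ i j : Fin ℓ,
      (if h : i < j then bdry ℓ u ⟨(i,j),h⟩ * (y i - y j) else 0)
        = (if i = u then (if u < j then y u - y j else 0) else 0)
          + (if j = u then (if i < u then y u - y i else 0) else 0) := by
    intro i j
    unfold bdry
    dsimp only
    split_ifs <;> first | (exfalso; omega) | (subst_vars; ring) | ring
  simp only [hterm, Finset.sum_add_distrib]
  have hA : ∑ i : Fin ℓ, ∑ j : Fin ℓ, (if i = u then (if u < j then y u - y j else 0) else 0)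
      = ∑ j : Fin ℓ, (if u < j then y u - y j else 0) := by
    have h4 : ∀ i : Fin ℓ, ∑ j : Fin ℓ, (if i = u then (if u < j then y u - y j else 0) else 0)
        = if i = u then ∑ j : Fin ℓ, (if u < j then y u - y j else 0) else 0 := by
      intro i; split_ifs <;> simp
    rw [Finset.sum_congr rfl fun i _ => h4 i]
    simp [Finset.sum_ite_eq']
  have hB : ∑ i : Fin ℓ, ∑ j : Fin ℓ, (if j = u then (if i < u then y u - y i else 0) else 0)
      = ∑ i : Fin ℓ, (if i < u then y u - y i else 0) := by
    refine Finset.sum_congr rfl fun i _ => ?_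
    simp [Finset.sum_ite_eq']
  rw [hA, hB, ← Finset.sum_add_distrib]
  have h2 : ∀ v : Fin ℓ,
      ((if u < v then y u - y v else 0) + (if v < u then y u - y v else 0))
        = (y u - y v) - (if v = u then y u - y v else 0) := by
    intro v; split_ifs <;> first | (exfalso; omega) | (subst_vars; ring) | ring
  simp only [h2]
  rw [Finset.sum_sub_distrib, Finset.sum_ite_eq', Finset.sum_sub_distrib, Finset.sum_const,
    Finset.card_univ, Fintype.card_fin]
  simp only [Finset.mem_univ, if_true, Pi.sub_apply, Pi.smul_apply, smul_eq_mul]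
  push_cast
  ring

lemma bdryT_ones : (bdry ℓ)ᵀ *ᵥ (fun _ => (1:ℝ)) = 0 := by
  ext e; rw [bdryT_mulVec]; simp

lemma bdryT_lap (y : Fin ℓ → ℝ) :
    (bdry ℓ)ᵀ *ᵥ (bdry ℓ *ᵥ ((bdry ℓ)ᵀ *ᵥ y)) = (ℓ:ℝ) • ((bdry ℓ)ᵀ *ᵥ y) := by
  rw [lap, Matrix.mulVec_sub, Matrix.mulVec_smul, Matrix.mulVec_smul, bdryT_ones,
    smul_zero, sub_zero]

lemma ker_step (x : Edge ℓ → ℝ) (h : (bdry ℓ)ᵀ *ᵥ (bdry ℓ *ᵥ x) = 0) :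
    bdry ℓ *ᵥ x = 0 := by
  have h0 : x ⬝ᵥ ((bdry ℓ)ᵀ *ᵥ (bdry ℓ *ᵥ x)) = 0 := by rw [h]; simp
  rw [Matrix.dotProduct_mulVec, Matrix.vecMul_transpose] at h0
  exact dotProduct_self_eq_zero.mp h0

lemma S_apply (x : Edge ℓ → ℝ) :
    Matrix.toLin' (SigMat ℓ) x = (3:ℝ)⁻¹ • (x + (bdry ℓ)ᵀ *ᵥ (bdry ℓ *ᵥ x)) := by
  rw [Matrix.toLin'_apply, sig_eq, Matrix.smul_mulVec, Matrix.add_mulVec,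
    Matrix.one_mulVec, ← Matrix.mulVec_mulVec]

lemma third_smul_cancel {x w : Edge ℓ → ℝ} {μ : ℝ} (h : (3:ℝ)⁻¹ • (x + w) = μ • x) :
    w = (3*μ - 1) • x := by
  have h3 : x + w = (3*μ) • x := by
    calc x + w = (3:ℝ) • ((3:ℝ)⁻¹ • (x + w)) := by rw [smul_smul]; norm_num
    _ = (3:ℝ) • (μ • x) := by rw [h]
    _ = (3*μ) • x := by rw [smul_smul]
  have h4 : w = (3*μ) • x - x := by rw [← h3]; abel
  rw [h4, sub_smul, one_smul]

lemma eig_cycle : Module.End.eigenspace (Matrix.toLin' (SigMat ℓ)) (1/3) = cycleSpace ℓ := by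
  ext x
  rw [Module.End.mem_eigenspace_iff, S_apply, cycleSpace, LinearMap.mem_ker,
    Matrix.toLin'_apply]
  constructor
  · intro h
    have h1 := third_smul_cancel h
    norm_num at h1
    rw [← Matrix.mulVec_mulVec] at h1
    exact ker_step x h1
  · intro h
    rw [h, Matrix.mulVec_zero, add_zero]
    norm_num [one_div]

lemma star_eq (i : Fin ℓ) : starVec ℓ i = Matrix.toLin' (bdry ℓ)ᵀ (Pi.single i 1) := by
  rw [Matrix.toLin'_apply, Matrix.mulVec_single_one]
  rfl

lemma cut_eq_range : cutSpace ℓ = LinearMap.range (Matrix.toLin' (bdry ℓ)ᵀ) := by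
  rw [cutSpace]
  have h1 : starVec ℓ = (Matrix.toLin' (bdry ℓ)ᵀ) ∘ (fun i => Pi.single i (1:ℝ)) := by
    funext i; exact star_eq i
  have h2 : (fun i => Pi.single i (1:ℝ)) = ⇑(Pi.basisFun ℝ (Fin ℓ)) := by
    funext i; simp [Pi.basisFun_apply]
  rw [h1, Set.range_comp, Submodule.span_image, h2, (Pi.basisFun ℝ (Fin ℓ)).span_eq,
    Submodule.map_top]

lemma cut_mem_iff (hℓ0 : ℓ ≠ 0) (x : Edge ℓ → ℝ) :
    Matrix.toLin' (SigMat ℓ) x = (1 + ((ℓ:ℝ) - 2)/3) • x ↔ x ∈ cutSpace ℓ := by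
  rw [S_apply, cut_eq_range]
  constructor
  · intro h
    have h1 := third_smul_cancel h
    have hc : (3:ℝ) * (1 + ((ℓ:ℝ) - 2)/3) - 1 = (ℓ:ℝ) := by ring
    rw [hc] at h1
    have hne : (ℓ:ℝ) ≠ 0 := Nat.cast_ne_zero.mpr hℓ0
    refine ⟨(ℓ:ℝ)⁻¹ • (bdry ℓ *ᵥ x), ?_⟩
    rw [Matrix.toLin'_apply, Matrix.mulVec_smul, h1, smul_smul, inv_mul_cancel₀ hne, one_smul]
  · rintro ⟨y, rfl⟩
    rw [Matrix.toLin'_apply, bdryT_lap]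
    have h3 : (bdry ℓ)ᵀ *ᵥ y + (ℓ:ℝ) • ((bdry ℓ)ᵀ *ᵥ y)
        = (1 + (ℓ:ℝ)) • ((bdry ℓ)ᵀ *ᵥ y) := by
      rw [add_smul, one_smul]
    rw [h3, smul_smul]
    congr 1
    field_simp
    ring

lemma card_edge : Fintype.card (Edge ℓ) = ℓ * (ℓ - 1) / 2 := by
  classical
  have h0 : (Fintype.card (Edge ℓ) : ℕ) = ∑ _e : Edge ℓ, 1 := by simp
  rw [h0, sum_edge (f := fun _ : Edge ℓ => (1:ℕ))]
  have hd : ∀ i j : Fin ℓ, (if _ : i < j then (1:ℕ) else 0) = if i < j then 1 else 0 := by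
    intro i j; split_ifs <;> rfl
  simp only [hd]
  have key : ∀ i : Fin ℓ, ∑ j : Fin ℓ, (if i = j then (0:ℕ) else 1) = ℓ - 1 := by
    intro i
    have hp : ∀ j : Fin ℓ, ((if i = j then (0:ℕ) else 1) + (if i = j then 1 else 0)) = 1 := by
      intro j; split_ifs <;> rfl
    have h5 : ∑ j : Fin ℓ, ((if i = j then (0:ℕ) else 1) + (if i = j then 1 else 0)) = ℓ := by
      simp [hp]
    rw [Finset.sum_add_distrib, Finset.sum_ite_eq] at h5
    simp only [Finset.mem_univ, if_true] at h5
    omega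
  have hsum : (∑ i : Fin ℓ, ∑ j : Fin ℓ, (if i < j then (1:ℕ) else 0))
      + (∑ i : Fin ℓ, ∑ j : Fin ℓ, (if i < j then (1:ℕ) else 0)) = ℓ * (ℓ - 1) := by
    nth_rewrite 2 [Finset.sum_comm]
    rw [← Finset.sum_add_distrib]
    have hmerge : ∀ i : Fin ℓ,
        ((∑ j : Fin ℓ, (if i < j then (1:ℕ) else 0)) + ∑ j : Fin ℓ, (if j < i then (1:ℕ) else 0))
          = ℓ - 1 := by
      intro i
      rw [← Finset.sum_add_distrib]
      have hp : ∀ j : Fin ℓ, ((if i < j then (1:ℕ) else 0) + (if j < i then 1 else 0))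
          = if i = j then 0 else 1 := by
        intro j; split_ifs <;> first | rfl | omega
      rw [Finset.sum_congr rfl fun j _ => hp j, key i]
    rw [Finset.sum_congr rfl fun i _ => hmerge i, Finset.sum_const, Finset.card_univ,
      Fintype.card_fin, smul_eq_mul]
  obtain ⟨m, hm⟩ : ∃ m, ℓ * (ℓ - 1) = m := ⟨_, rfl⟩
  rw [hm] at hsum ⊢
  omega

lemma ker_bt (hpos : 0 < ℓ) :
    LinearMap.ker (Matrix.toLin' (bdry ℓ)ᵀ) = Submodule.span ℝ {fun _ => (1:ℝ)} := by
  haveI : NeZero ℓ := ⟨hpos.ne'⟩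
  ext y
  rw [LinearMap.mem_ker, Matrix.toLin'_apply, Submodule.mem_span_singleton]
  constructor
  · intro h
    refine ⟨y 0, ?_⟩
    funext i
    simp only [Pi.smul_apply, smul_eq_mul, mul_one]
    rcases eq_or_ne i 0 with h0 | h0
    · rw [h0]
    · have hi : (0 : Fin ℓ) < i := (Fin.pos_iff_ne_zero' i).mpr h0
      have he := congrFun h ⟨((0 : Fin ℓ), i), hi⟩
      rw [bdryT_mulVec] at he
      simp only [Pi.zero_apply] at he
      linarith [he]
  · rintro ⟨a, rfl⟩
    ext e
    rw [bdryT_mulVec]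
    simp

lemma finrank_cut (hpos : 0 < ℓ) : Module.finrank ℝ (cutSpace ℓ) = ℓ - 1 := by
  haveI : NeZero ℓ := ⟨hpos.ne'⟩
  have hrn := LinearMap.finrank_range_add_finrank_ker (Matrix.toLin' (bdry ℓ)ᵀ)
  rw [ker_bt hpos] at hrn
  have h1 : Module.finrank ℝ
      (Submodule.span ℝ {fun _ => (1:ℝ)} : Submodule ℝ (Fin ℓ → ℝ)) = 1 := by
    apply finrank_span_singleton
    intro hz
    have h2 := congrFun hz 0
    simp at h2
  rw [h1, Module.finrank_fintype_fun_eq_card, Fintype.card_fin] at hrn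
  rw [cut_eq_range]
  omega

lemma finrank_range_bdry (hpos : 0 < ℓ) :
    Module.finrank ℝ (LinearMap.range (Matrix.toLin' (bdry ℓ))) = ℓ - 1 := by
  have h1 : Module.finrank ℝ (LinearMap.range (Matrix.toLin' (bdry ℓ))) = (bdry ℓ).rank := by
    rw [Matrix.rank, Matrix.toLin'_apply']
  have h2 : (bdry ℓ)ᵀ.rank = ℓ - 1 := by
    rw [Matrix.rank, ← Matrix.toLin'_apply', ← cut_eq_range]
    exact finrank_cut hpos
  rw [h1, ← Matrix.rank_transpose, h2]

lemma finrank_cycle (hℓ : 3 ≤ ℓ) :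
    Module.finrank ℝ (cycleSpace ℓ) = (ℓ - 1) * (ℓ - 2) / 2 := by
  have hrn := LinearMap.finrank_range_add_finrank_ker (Matrix.toLin' (bdry ℓ))
  rw [finrank_range_bdry (by omega), Module.finrank_fintype_fun_eq_card, card_edge] at hrn
  rw [cycleSpace]
  obtain ⟨n, rfl⟩ : ∃ n, ℓ = n + 3 := ⟨ℓ - 3, by omega⟩
  have e1 : n + 3 - 1 = n + 2 := rfl
  have e2 : n + 3 - 2 = n + 1 := rfl
  rw [e1] at hrn
  rw [e1, e2]
  obtain ⟨k, hk⟩ : ∃ k, (n + 2) * (n + 1) = k + k := by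
    have he : Even ((n + 1) * (n + 2)) := Nat.even_mul_succ_self (n + 1)
    obtain ⟨r, hr⟩ := he
    exact ⟨r, by rw [Nat.mul_comm]; exact hr⟩
  have hprod : (n + 3) * (n + 2) = 2 * (n + 2) + (k + k) := by rw [← hk]; ring
  rw [hprod] at hrn
  rw [hk]
  omega

end SigAux

/-- `Σ` has exactly two eigenvalues: `1/3`, with eigenspace the cycle space of
`K_ℓ` (of dimension `(ℓ-1)(ℓ-2)/2`), and `1 + (ℓ-2)/3`, with eigenspace the cut
space (of dimension `ℓ-1`). -/
theorem sig_eigenvalues {ℓ : ℕ} (hℓ : 3 ≤ ℓ) :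
    (∀ μ : ℝ, Module.End.HasEigenvalue (Matrix.toLin' (SigMat ℓ)) μ ↔
      μ = 1/3 ∨ μ = 1 + ((ℓ : ℝ) - 2) / 3) ∧
    Module.End.eigenspace (Matrix.toLin' (SigMat ℓ)) (1/3) = cycleSpace ℓ ∧
    Module.End.eigenspace (Matrix.toLin' (SigMat ℓ)) (1 + ((ℓ : ℝ) - 2) / 3) = cutSpace ℓ ∧
    Module.finrank ℝ (cycleSpace ℓ) = (ℓ - 1) * (ℓ - 2) / 2 ∧
    Module.finrank ℝ (cutSpace ℓ) = ℓ - 1 := by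
  have hpos : 0 < ℓ := by omega
  have hcyc := SigAux.eig_cycle (ℓ := ℓ)
  have hcut : Module.End.eigenspace (Matrix.toLin' (SigMat ℓ)) (1 + ((ℓ : ℝ) - 2) / 3)
      = cutSpace ℓ := by
    ext x
    rw [Module.End.mem_eigenspace_iff]
    exact SigAux.cut_mem_iff (by omega) x
  have hdim1 := SigAux.finrank_cycle hℓ
  have hdim2 := SigAux.finrank_cut hpos
  refine ⟨?_, hcyc, hcut, hdim1, hdim2⟩
  intro μ
  constructor
  · intro hμ
    obtain ⟨x, hx⟩ := hμ.exists_hasEigenvector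
    have hmain : Matrix.toLin' (SigMat ℓ) x = μ • x := hx.apply_eq_smul
    rw [SigAux.S_apply] at hmain
    have h1 := SigAux.third_smul_cancel hmain
    set c : ℝ := 3 * μ - 1 with hc
    have h2 := SigAux.bdryT_lap (ℓ := ℓ) (bdry ℓ *ᵥ x)
    rw [h1, Matrix.mulVec_smul, Matrix.mulVec_smul, h1, smul_smul, smul_smul] at h2
    have h3 : (c * c - (ℓ:ℝ) * c) • x = 0 := by rw [sub_smul, h2, sub_self]
    rcases smul_eq_zero.mp h3 with h4 | h4
    · have h5 : c * (c - (ℓ:ℝ)) = 0 := by linear_combination h4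
      rcases mul_eq_zero.mp h5 with h6 | h6
      · left
        rw [hc] at h6
        linarith
      · right
        rw [hc] at h6
        have hcast : (3:ℝ) * (1 + ((ℓ:ℝ) - 2) / 3) - 1 = (ℓ:ℝ) := by ring
        linarith
    · exact absurd h4 hx.2
  · intro h
    rw [Module.End.hasEigenvalue_iff]
    rcases h with rfl | rfl
    · rw [hcyc]
      intro hbot
      rw [hbot, finrank_bot] at hdim1
      have hle : 2 ≤ (ℓ - 1) * (ℓ - 2) := by
        calc 2 = 2 * 1 := rfl
        _ ≤ (ℓ - 1) * (ℓ - 2) := Nat.mul_le_mul (by omega) (by omega)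
      have : 1 ≤ (ℓ - 1) * (ℓ - 2) / 2 := (Nat.le_div_iff_mul_le (by norm_num)).mpr (by omega)
      omega
    · rw [hcut]
      intro hbot
      rw [hbot, finrank_bot] at hdim2
      omega
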